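/- Let d : ℝ → ℝ be an additive function and let α, β ∈ ℝ satisfy α < 0 < β. If d(sin(x)) = cos(x)·d(x) holds for all x ∈ (α, β), then d is a standard derivation. -/

import Mathlib

open Real

/-- If an additive function `d` derivates `sin` on `(α, β)` with `α < 0 < β`,
then `d` is a standard derivation. -/

theorem stmt_13 (d : ℝ → ℝ) (hd : ∀ x y : ℝ, d (x + y) = d x + d y)
    (α β : ℝ) (h1 : α < 0) (h2 : 0 < β)
    (h : ∀ x ∈ Set.Ioo α β, d (Real.sin x) = Real.cos x * d x) :
    ∀ x y : ℝ, d (x * y) = d x * y + x * d y := by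
  have d0 : d 0 = 0 := by have := hd 0 0; simp at this; linarith
  have dneg : ∀ x, d (-x) = - d x := by
    intro x; have := hd x (-x); simp [d0] at this; linarith
  have dsub : ∀ x y, d (x - y) = d x - d y := by
    intro x y; rw [sub_eq_add_neg, hd, dneg]; ring
  have d2 : ∀ x, d (2*x) = 2 * d x := by
    intro x; rw [show 2*x = x + x by ring, hd]; ring
  have d3 : ∀ x, d (3*x) = 3 * d x := by
    intro x; rw [show 3*x = x + (x + x) by ring, hd, hd]; ring
  have d4 : ∀ x, d (4*x) = 4 * d x := by
    intro x; rw [show 4*x = x + (x + (x + x)) by ring, hd, hd, hd]; ring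
  have dhalf : ∀ x, d (x/2) = d x / 2 := by
    intro x; have := hd (x/2) (x/2); rw [add_halves] at this; linarith
  have dpow : ∀ n : ℕ, ∀ x, d (x / 2^n) = d x / 2^n := by
    intro n
    induction n with
    | zero => simp
    | succ k ih =>
      intro x
      have : x / 2^(k+1) = (x / 2^k) / 2 := by ring
      rw [this, dhalf, ih]; ring
  -- setup
  set ε : ℝ := min (-α) β with hεdef
  have hε : 0 < ε := lt_min (by linarith) h2
  have memI : ∀ x : ℝ, |x| < ε → x ∈ Set.Ioo α β := by
    intro x hx
    rw [abs_lt] at hx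
    constructor
    · have : ε ≤ -α := min_le_left _ _
      linarith
    · have : ε ≤ β := min_le_right _ _
      linarith
  set a : ℝ := min (ε/3) 1 with hadef
  have ha : 0 < a := lt_min (by linarith) one_pos
  have ha1 : a ≤ 1 := min_le_right _ _
  have haε : a ≤ ε/3 := min_le_left _ _
  set δ : ℝ := Real.sin a with hδdef
  have hδ : 0 < δ := Real.sin_pos_of_pos_of_lt_pi ha (by linarith [Real.pi_gt_three])
  have hδle : δ ≤ 1 := by rw [hδdef]; exact Real.sin_le_one a
  -- local cube identity
  have cubeLoc : ∀ t : ℝ, |t| < δ → d (t^3) = 3 * t^2 * d t := by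
    intro t ht
    have htδ := abs_lt.1 ht
    have ht1 : -1 ≤ t := by linarith
    have ht2 : t ≤ 1 := by linarith
    have ht' : t < Real.sin a := by rw [← hδdef]; exact htδ.2
    have ht'' : -Real.sin a < t := by rw [← hδdef]; exact htδ.1
    set x := Real.arcsin t with hxdef
    have hs : Real.sin x = t := Real.sin_arcsin ht1 ht2
    have hax : Real.arcsin (Real.sin a) = a :=
      Real.arcsin_sin (by linarith [Real.pi_gt_three]) (by linarith [Real.pi_gt_three])
    have hax' : Real.arcsin (Real.sin (-a)) = -a :=
      Real.arcsin_sin (by linarith [Real.pi_gt_three]) (by linarith [Real.pi_gt_three])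
    have hxa : x < a := by
      have h' : Real.arcsin t < Real.arcsin (Real.sin a) :=
        Real.strictMonoOn_arcsin (Set.mem_Icc.2 ⟨ht1, ht2⟩)
          (Set.mem_Icc.2 ⟨Real.neg_one_le_sin a, Real.sin_le_one a⟩) ht'
      rw [hax] at h'
      exact h'
    have hxa' : -a < x := by
      have h' : Real.arcsin (Real.sin (-a)) < Real.arcsin t :=
        Real.strictMonoOn_arcsin
          (Set.mem_Icc.2 ⟨Real.neg_one_le_sin (-a), Real.sin_le_one (-a)⟩)
          (Set.mem_Icc.2 ⟨ht1, ht2⟩)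
          (by rw [Real.sin_neg]; exact ht'')
      rw [hax'] at h'
      exact h'
    have hxε : |x| < ε/3 := by rw [abs_lt]; constructor <;> nlinarith
    have e1 : d (Real.sin x) = Real.cos x * d x :=
      h x (memI x (by have := abs_lt.1 hxε; rw [abs_lt]; constructor <;> linarith))
    have e3 : d (Real.sin (3*x)) = Real.cos (3*x) * d (3*x) :=
      h (3*x) (memI (3*x) (by
        have := abs_lt.1 hxε; rw [abs_lt]; constructor <;> linarith))
    rw [d3] at e3
    have key : 4 * d ((Real.sin x)^3) = 3 * Real.cos x * d x - 3 * Real.cos (3*x) * d x := by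
      have h4 : d (4 * (Real.sin x)^3) = 4 * d ((Real.sin x)^3) := d4 _
      have hid : 4 * (Real.sin x)^3 = 3 * Real.sin x - Real.sin (3*x) := by
        rw [Real.sin_three_mul]; ring
      have : d (3 * Real.sin x - Real.sin (3*x)) = 3 * d (Real.sin x) - d (Real.sin (3*x)) := by
        rw [dsub, d3]
      rw [← h4, hid, this, e1, e3]; ring
    have hc3 : Real.cos (3*x) = 4 * (Real.cos x)^3 - 3 * Real.cos x := Real.cos_three_mul x
    have hp : (Real.sin x)^2 + (Real.cos x)^2 = 1 := Real.sin_sq_add_cos_sq x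
    rw [← hs, e1]
    linear_combination key/4 - 3*(d x)/4 * hc3 - 3*(Real.cos x)*(d x) * hp
  -- global cube identity
  have cube : ∀ t : ℝ, d (t^3) = 3 * t^2 * d t := by
    intro t
    obtain ⟨n, hn⟩ := pow_unbounded_of_one_lt (|t| / δ) (by norm_num : (1:ℝ) < 2)
    have h2n : (0:ℝ) < 2^n := by positivity
    have hsmall : |t / 2^n| < δ := by
      rw [abs_div, abs_of_pos h2n, div_lt_iff₀ h2n]
      calc |t| = (|t|/δ) * δ := by field_simp
      _ < 2^n * δ := by apply mul_lt_mul_of_pos_right hn hδ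
      _ = δ * 2^n := by ring
    have := cubeLoc (t / 2^n) hsmall
    have hcu : (t / 2^n)^3 = t^3 / 2^(3*n) := by
      rw [div_pow, ← pow_mul]; ring_nf
    rw [hcu, dpow, dpow] at this
    have h2n3 : (0:ℝ) < 2^(3*n) := by positivity
    have hexp : ((2:ℝ)^n)^2 * 2^n = 2^(3*n) := by
      rw [← pow_mul, ← pow_add]; ring_nf
    have goal := this
    field_simp at goal
    rw [← hexp] at goal
    have h3 : ((2:ℝ)^n)^2 * 2^n = ((2:ℝ)^n)^3 := by ring
    rw [h3] at goal
    exact mul_right_cancel₀ (b := ((2:ℝ)^n)^3) (by positivity) (goal.trans (by ring))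
  have d1 : d 1 = 0 := by have := cube 1; simp at this; linarith
  -- polarization
  have hxy2 : ∀ x y : ℝ, d (x * y^2) = y^2 * d x + 2*x*y*d y := by
    intro x y
    have A : d ((x+y)^3) = 3*(x+y)^2*(d x + d y) := by rw [cube, hd]
    have B : d ((x-y)^3) = 3*(x-y)^2*(d x - d y) := by rw [cube, dsub]
    have e1 : d ((x+y)^3) = d (x^3) + 3 * d (x^2*y) + 3 * d (x*y^2) + d (y^3) := by
      rw [show (x+y)^3 = x^3 + (3*(x^2*y) + (3*(x*y^2) + y^3)) by ring, hd, hd, hd, d3, d3]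
      ring
    have e2 : d ((x-y)^3) = d (x^3) - 3 * d (x^2*y) + 3 * d (x*y^2) - d (y^3) := by
      rw [show (x-y)^3 = (x^3 + 3*(x*y^2)) - (3*(x^2*y) + y^3) by ring, dsub, hd, hd, d3, d3]
      ring
    have cx := cube x
    have cy := cube y
    linear_combination (A - e1)/6 + (B - e2)/6 - cx/3
  intro x y
  have P := hxy2 x (y+1)
  have hdy1 : d (y+1) = d y := by rw [hd, d1]; ring
  have LHS : d (x*(y+1)^2) = d (x*y^2) + 2 * d (x*y) + d x := by
    rw [show x*(y+1)^2 = x*y^2 + (2*(x*y) + x) by ring, hd, hd, d2]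
    ring
  rw [LHS, hdy1, hxy2 x y] at P
  linear_combination P/2
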